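/- arXiv:1904.08498 — 5 statements merged into one kernel-verified Lean document; each statement's English description precedes it below -/
import Mathlib

section
/- Let M : ℝ → Mat₈(ℝ) be differentiable with M(t) symmetric, let C : ℝ → Mat₈(ℝ) with Ṁ(t) − 2C(t) skew-symmetric for all t, and let e_v, δ : ℝ → ℝ⁸ with e_v differentiable satisfy M(t) ė_v(t) + C(t) e_v(t) + K_v e_v(t) = δ(t) for a constant 8×8 matrix K_v. Assume there are constants 0 < λ_min ≤ λ_max with λ_min‖ν‖² ≤ νᵀ M(t) ν ≤ λ_max‖ν‖² for all ν ∈ ℝ⁸ and all t, and a constant k > 0 with νᵀ K_v ν ≥ k‖ν‖² for all ν ∈ ℝ⁸. Then V(t) := (1/2) e_v(t)ᵀ M(t) e_v(t) satisfies V'(t) ≤ −γ V(t) + √(2V(t)/λ_min) · ‖δ(t)‖ for all t, where γ := 2k/λ_max. -/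
open Matrix

/-- For the error dynamics `M ė_v + C e_v + K_v e_v = δ` with the standard robot
properties (`λ_min‖ν‖² ≤ νᵀMν ≤ λ_max‖ν‖²`, `Ṁ − 2C` skew-symmetric) and
`νᵀ K_v ν ≥ k‖ν‖²`, the Lyapunov function `V = ½ e_vᵀ M e_v` satisfies
`V' ≤ −γ V + √(2V/λ_min) ‖δ‖`, where `γ = 2k/λ_max`. -/
theorem stmt_4 (M M' C : ℝ → Matrix (Fin 8) (Fin 8) ℝ)
    (Kv : Matrix (Fin 8) (Fin 8) ℝ)
    (ev ev' δ : ℝ → Fin 8 → ℝ)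
    (lmin lmax k : ℝ) (hlmin : 0 < lmin) (hl : lmin ≤ lmax) (hk : 0 < k)
    (hM : ∀ t i j, HasDerivAt (fun s => M s i j) (M' t i j) t)
    (hsymm : ∀ t, (M t).IsSymm)
    (hskew : ∀ t, (M' t - (2 : ℝ) • C t)ᵀ = -(M' t - (2 : ℝ) • C t))
    (hev : ∀ t, HasDerivAt ev (ev' t) t)
    (hdyn : ∀ t, M t *ᵥ ev' t + C t *ᵥ ev t + Kv *ᵥ ev t = δ t)
    (hbound : ∀ t (ν : Fin 8 → ℝ), lmin * (ν ⬝ᵥ ν) ≤ ν ⬝ᵥ (M t *ᵥ ν)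
        ∧ ν ⬝ᵥ (M t *ᵥ ν) ≤ lmax * (ν ⬝ᵥ ν))
    (hKv : ∀ ν : Fin 8 → ℝ, k * (ν ⬝ᵥ ν) ≤ ν ⬝ᵥ (Kv *ᵥ ν)) :
    ∀ t, deriv (fun s => (1 / 2 : ℝ) * (ev s ⬝ᵥ (M s *ᵥ ev s))) t
        ≤ -(2 * k / lmax) * ((1 / 2 : ℝ) * (ev t ⬝ᵥ (M t *ᵥ ev t)))
          + Real.sqrt (2 * ((1 / 2 : ℝ) * (ev t ⬝ᵥ (M t *ᵥ ev t))) / lmin)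
            * Real.sqrt (δ t ⬝ᵥ δ t) := by
  intro t
  have hlmax : 0 < lmax := lt_of_lt_of_le hlmin hl
  have hevc : ∀ i, HasDerivAt (fun s => ev s i) (ev' t i) t :=
    fun i => (hasDerivAt_pi.mp (hev t)) i
  -- derivative of V
  have hDsum : HasDerivAt (fun s => (1 / 2 : ℝ) * (ev s ⬝ᵥ (M s *ᵥ ev s)))
      ((1 / 2 : ℝ) * (ev' t ⬝ᵥ (M t *ᵥ ev t) + (ev t ⬝ᵥ (M' t *ᵥ ev t)
        + ev t ⬝ᵥ (M t *ᵥ ev' t)))) t := by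
    have h1 : HasDerivAt (fun s => ev s ⬝ᵥ (M s *ᵥ ev s))
        (ev' t ⬝ᵥ (M t *ᵥ ev t) + (ev t ⬝ᵥ (M' t *ᵥ ev t)
          + ev t ⬝ᵥ (M t *ᵥ ev' t))) t := by
      have key : ∀ i, HasDerivAt (fun s => ev s i * ∑ j, M s i j * ev s j)
          (ev' t i * (∑ j, M t i j * ev t j)
            + ev t i * (∑ j, (M' t i j * ev t j + M t i j * ev' t j))) t := by
        intro i
        have hinner : HasDerivAt (fun s => ∑ j, M s i j * ev s j)
            (∑ j, (M' t i j * ev t j + M t i j * ev' t j)) t :=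
          HasDerivAt.fun_sum (fun j _ => (hM t i j).mul (hevc j))
        exact (hevc i).mul hinner
      have := HasDerivAt.fun_sum
        (fun i (_ : i ∈ (Finset.univ : Finset (Fin 8))) => key i)
      have heq : (fun s => ∑ i, ev s i * ∑ j, M s i j * ev s j)
          = fun s => ev s ⬝ᵥ (M s *ᵥ ev s) := by
        funext s; simp [dotProduct, mulVec]
      rw [heq] at this
      refine this.congr_deriv ?_
      simp only [dotProduct, mulVec, mul_add, Finset.mul_sum, Finset.sum_add_distrib]
    exact h1.const_mul _
  rw [hDsum.deriv]
  -- general: x ⬝ (A y) = y ⬝ (Aᵀ x)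
  have quadT : ∀ (A : Matrix (Fin 8) (Fin 8) ℝ) (x y : Fin 8 → ℝ),
      x ⬝ᵥ (A *ᵥ y) = y ⬝ᵥ (Aᵀ *ᵥ x) := by
    intro A x y
    conv_lhs => rw [Matrix.dotProduct_mulVec, ← Matrix.transpose_transpose A,
      Matrix.vecMul_transpose]
    exact dotProduct_comm _ _
  -- symmetry: ev' ⬝ M ev = ev ⬝ M ev'
  have hsym1 : ev' t ⬝ᵥ (M t *ᵥ ev t) = ev t ⬝ᵥ (M t *ᵥ ev' t) := by
    rw [quadT, (hsymm t).eq]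
  -- skew-symmetry: ev ⬝ (M' - 2C) ev = 0
  have hskew0 : ev t ⬝ᵥ ((M' t - (2 : ℝ) • C t) *ᵥ ev t) = 0 := by
    have h1 : ev t ⬝ᵥ ((M' t - (2 : ℝ) • C t) *ᵥ ev t)
        = ev t ⬝ᵥ ((M' t - (2 : ℝ) • C t)ᵀ *ᵥ ev t) := quadT _ _ _
    rw [hskew t] at h1
    simp only [Matrix.neg_mulVec, dotProduct_neg] at h1
    linarith
  have hMprime : ev t ⬝ᵥ (M' t *ᵥ ev t) = 2 * (ev t ⬝ᵥ (C t *ᵥ ev t)) := by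
    have : ev t ⬝ᵥ ((M' t - (2 : ℝ) • C t) *ᵥ ev t)
        = ev t ⬝ᵥ (M' t *ᵥ ev t) - 2 * (ev t ⬝ᵥ (C t *ᵥ ev t)) := by
      simp [Matrix.sub_mulVec, Matrix.smul_mulVec, dotProduct_sub,
        dotProduct_smul, smul_eq_mul]
    linarith [hskew0, this]
  -- dynamics: M ev' = δ - C ev - Kv ev
  have hdyn' : ev t ⬝ᵥ (M t *ᵥ ev' t)
      = ev t ⬝ᵥ δ t - ev t ⬝ᵥ (C t *ᵥ ev t) - ev t ⬝ᵥ (Kv *ᵥ ev t) := by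
    have h := congrArg (fun w => ev t ⬝ᵥ w) (hdyn t)
    simp only [dotProduct_add] at h
    linarith
  -- so V' = ev ⬝ δ - ev ⬝ Kv ev
  have hV' : (1 / 2 : ℝ) * (ev' t ⬝ᵥ (M t *ᵥ ev t) + (ev t ⬝ᵥ (M' t *ᵥ ev t)
        + ev t ⬝ᵥ (M t *ᵥ ev' t)))
      = ev t ⬝ᵥ δ t - ev t ⬝ᵥ (Kv *ᵥ ev t) := by
    rw [hsym1, hMprime, hdyn']; ring
  rw [hV']
  set V := (1 / 2 : ℝ) * (ev t ⬝ᵥ (M t *ᵥ ev t)) with hVdef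
  have hMb := hbound t (ev t)
  have hee : (0:ℝ) ≤ ev t ⬝ᵥ ev t := by
    simpa [dotProduct] using Finset.sum_nonneg
      (fun i (_ : i ∈ (Finset.univ : Finset (Fin 8))) => mul_self_nonneg (ev t i))
  -- first term: -(ev ⬝ Kv ev) ≤ -(2k/lmax) V
  have hterm1 : -(ev t ⬝ᵥ (Kv *ᵥ ev t)) ≤ -(2 * k / lmax) * V := by
    have h1 : 2 * k / lmax * V ≤ k * (ev t ⬝ᵥ ev t) := by
      rw [div_mul_eq_mul_div, div_le_iff₀ hlmax]
      nlinarith [hMb.2, hk.le]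
    have h2 := hKv (ev t)
    have : 2 * k / lmax * V ≤ ev t ⬝ᵥ (Kv *ᵥ ev t) := le_trans h1 h2
    linarith
  -- second term: ev ⬝ δ ≤ √(2V/lmin) √(δ⬝δ)
  have hterm2 : ev t ⬝ᵥ δ t ≤ Real.sqrt (2 * V / lmin) * Real.sqrt (δ t ⬝ᵥ δ t) := by
    have hdd : (0:ℝ) ≤ δ t ⬝ᵥ δ t := by
      simpa [dotProduct] using Finset.sum_nonneg
        (fun i (_ : i ∈ (Finset.univ : Finset (Fin 8))) => mul_self_nonneg (δ t i))
    have hcs : (ev t ⬝ᵥ δ t) ^ 2 ≤ (ev t ⬝ᵥ ev t) * (δ t ⬝ᵥ δ t) := by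
      simpa [dotProduct, sq, Finset.sum_mul_sum, mul_assoc, mul_left_comm] using
        Finset.sum_mul_sq_le_sq_mul_sq Finset.univ (ev t) (δ t)
    have h1 : ev t ⬝ᵥ δ t ≤ Real.sqrt (ev t ⬝ᵥ ev t) * Real.sqrt (δ t ⬝ᵥ δ t) := by
      calc ev t ⬝ᵥ δ t ≤ Real.sqrt ((ev t ⬝ᵥ δ t) ^ 2) := by
            rw [Real.sqrt_sq_eq_abs]; exact le_abs_self _
        _ ≤ Real.sqrt ((ev t ⬝ᵥ ev t) * (δ t ⬝ᵥ δ t)) := Real.sqrt_le_sqrt hcs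
        _ = Real.sqrt (ev t ⬝ᵥ ev t) * Real.sqrt (δ t ⬝ᵥ δ t) := Real.sqrt_mul hee _
    have h2 : Real.sqrt (ev t ⬝ᵥ ev t) ≤ Real.sqrt (2 * V / lmin) := by
      apply Real.sqrt_le_sqrt
      rw [le_div_iff₀ hlmin]
      nlinarith [hMb.1]
    calc ev t ⬝ᵥ δ t ≤ Real.sqrt (ev t ⬝ᵥ ev t) * Real.sqrt (δ t ⬝ᵥ δ t) := h1
      _ ≤ Real.sqrt (2 * V / lmin) * Real.sqrt (δ t ⬝ᵥ δ t) :=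
          mul_le_mul_of_nonneg_right h2 (Real.sqrt_nonneg _)
  linarith
end

section
/- Let m > 0, T > 0, g ∈ ℝ, and ψ, θ, φ, ẍ, ÿ, z̈, F_x, F_y, F_z ∈ ℝ satisfy the translational dynamics m ẍ = T(cosψ sinθ cosφ + sinψ sinφ) + F_x, m ÿ = T(sinψ sinθ cosφ − cosψ sinφ) + F_y and m z̈ = −m g + T cosθ cosφ + F_z. Define ẍ_f := ẍ − F_x/m, ÿ_f := ÿ − F_y/m and z̈_f := z̈ + g − F_z/m. Then ẍ_f² + ÿ_f² + z̈_f² = (T/m)² and sinφ = (ẍ_f sinψ − ÿ_f cosψ)/√(ẍ_f² + ÿ_f² + z̈_f²). -/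
/-- First second-order nonholonomic constraint of the quadrotor manipulation system:
from the translational dynamics, the compensated accelerations satisfy
`ẍ_f² + ÿ_f² + z̈_f² = (T/m)²` and `sin φ = (ẍ_f sin ψ − ÿ_f cos ψ)/√(ẍ_f² + ÿ_f² + z̈_f²)`. -/
theorem stmt_8 (m T g ψ θ φ xdd ydd zdd Fx Fy Fz : ℝ)
    (hm : 0 < m) (hT : 0 < T)
    (h1 : m * xdd = T * (Real.cos ψ * Real.sin θ * Real.cos φ + Real.sin ψ * Real.sin φ) + Fx)
    (h2 : m * ydd = T * (Real.sin ψ * Real.sin θ * Real.cos φ - Real.cos ψ * Real.sin φ) + Fy)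
    (h3 : m * zdd = -(m * g) + T * (Real.cos θ * Real.cos φ) + Fz)
    (xf yf zf : ℝ)
    (hxf : xf = xdd - Fx / m) (hyf : yf = ydd - Fy / m) (hzf : zf = zdd + g - Fz / m) :
    xf ^ 2 + yf ^ 2 + zf ^ 2 = (T / m) ^ 2 ∧
      Real.sin φ = (xf * Real.sin ψ - yf * Real.cos ψ) / Real.sqrt (xf ^ 2 + yf ^ 2 + zf ^ 2) := by
  have hm' : m ≠ 0 := ne_of_gt hm
  have hx : xf = T / m * (Real.cos ψ * Real.sin θ * Real.cos φ + Real.sin ψ * Real.sin φ) := by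
    rw [hxf]; field_simp; linarith [h1]
  have hy : yf = T / m * (Real.sin ψ * Real.sin θ * Real.cos φ - Real.cos ψ * Real.sin φ) := by
    rw [hyf]; field_simp; linarith [h2]
  have hz : zf = T / m * (Real.cos θ * Real.cos φ) := by
    rw [hzf]; field_simp; linarith [h3]
  have hsq : xf ^ 2 + yf ^ 2 + zf ^ 2 = (T / m) ^ 2 := by
    have key : (Real.cos ψ * Real.sin θ * Real.cos φ + Real.sin ψ * Real.sin φ) ^ 2 +
        (Real.sin ψ * Real.sin θ * Real.cos φ - Real.cos ψ * Real.sin φ) ^ 2 +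
        (Real.cos θ * Real.cos φ) ^ 2 = 1 := by
      linear_combination (Real.sin θ ^ 2 * Real.cos φ ^ 2 + Real.sin φ ^ 2) *
          Real.sin_sq_add_cos_sq ψ + Real.cos φ ^ 2 * Real.sin_sq_add_cos_sq θ +
          Real.sin_sq_add_cos_sq φ
    rw [hx, hy, hz]
    linear_combination (T / m) ^ 2 * key
  refine ⟨hsq, ?_⟩
  have hTm : 0 < T / m := div_pos hT hm
  rw [hsq, Real.sqrt_sq hTm.le]
  have : xf * Real.sin ψ - yf * Real.cos ψ = T / m * Real.sin φ := by
    rw [hx, hy]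
    linear_combination (T / m * Real.sin φ) * Real.sin_sq_add_cos_sq ψ
  rw [this]
  field_simp
end

section
/- Let m > 0, T > 0, g ∈ ℝ, and ψ, θ, φ, ẍ, ÿ, z̈, F_x, F_y, F_z ∈ ℝ satisfy the translational dynamics m ẍ = T(cosψ sinθ cosφ + sinψ sinφ) + F_x, m ÿ = T(sinψ sinθ cosφ − cosψ sinφ) + F_y and m z̈ = −m g + T cosθ cosφ + F_z, and assume cosθ ≠ 0 and cosφ ≠ 0. Define ẍ_f := ẍ − F_x/m, ÿ_f := ÿ − F_y/m and z̈_f := z̈ + g − F_z/m. Then z̈_f ≠ 0 and tanθ = (ẍ_f cosψ + ÿ_f sinψ)/z̈_f. -/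
/-- Second second-order nonholonomic constraint of the quadrotor manipulation system:
if `cos θ ≠ 0` and `cos φ ≠ 0`, then `z̈_f ≠ 0` and
`tan θ = (ẍ_f cos ψ + ÿ_f sin ψ)/z̈_f`. -/
theorem stmt_9 (m T g ψ θ φ xdd ydd zdd Fx Fy Fz : ℝ)
    (hm : 0 < m) (hT : 0 < T)
    (h1 : m * xdd = T * (Real.cos ψ * Real.sin θ * Real.cos φ + Real.sin ψ * Real.sin φ) + Fx)
    (h2 : m * ydd = T * (Real.sin ψ * Real.sin θ * Real.cos φ - Real.cos ψ * Real.sin φ) + Fy)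
    (h3 : m * zdd = -(m * g) + T * (Real.cos θ * Real.cos φ) + Fz)
    (hθ : Real.cos θ ≠ 0) (hφ : Real.cos φ ≠ 0)
    (xf yf zf : ℝ)
    (hxf : xf = xdd - Fx / m) (hyf : yf = ydd - Fy / m) (hzf : zf = zdd + g - Fz / m) :
    zf ≠ 0 ∧ Real.tan θ = (xf * Real.cos ψ + yf * Real.sin ψ) / zf := by
  have hm' : m ≠ 0 := ne_of_gt hm
  have hT' : T ≠ 0 := ne_of_gt hT
  have hz : zf = T * (Real.cos θ * Real.cos φ) / m := by
    rw [hzf]; field_simp; linarith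
  have hzne : zf ≠ 0 := by
    rw [hz]
    exact div_ne_zero (mul_ne_zero hT' (mul_ne_zero hθ hφ)) hm'
  refine ⟨hzne, ?_⟩
  have hx : xf = (T * (Real.cos ψ * Real.sin θ * Real.cos φ + Real.sin ψ * Real.sin φ)) / m := by
    rw [hxf]; field_simp; linarith
  have hy : yf = (T * (Real.sin ψ * Real.sin θ * Real.cos φ - Real.cos ψ * Real.sin φ)) / m := by
    rw [hyf]; field_simp; linarith
  have hpyth := Real.sin_sq_add_cos_sq ψ
  rw [Real.tan_eq_sin_div_cos, hx, hy, hz]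
  field_simp
  linear_combination (-(Real.sin θ * Real.cos φ)) * hpyth
end

section
/- Let ψ, θ, φ : ℝ → ℝ be differentiable, and let R(t) := R_b(ψ(t),θ(t),φ(t)) be the corresponding ZYX yaw–pitch–roll rotation matrix. Define T_b(ψ,θ) := [[0, −sinψ, cosψ cosθ],[0, cosψ, sinψ cosθ],[1, 0, −sinθ]] and ω_b(t) := T_b(ψ(t),θ(t)) · (ψ̇(t), θ̇(t), φ̇(t)). Then R is differentiable with R'(t) = Skew(ω_b(t)) · R(t) for all t; i.e. T_b transforms the Euler-angle rates Φ̇_b = (ψ̇, θ̇, φ̇) into the body angular velocity ω_b. -/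
open Matrix

/-- ZYX yaw–pitch–roll rotation matrix of the quadrotor body frame. -/
noncomputable def Rb (ψ θ φ : ℝ) : Matrix (Fin 3) (Fin 3) ℝ :=
  !![Real.cos ψ * Real.cos θ,
     Real.sin φ * Real.sin θ * Real.cos ψ - Real.sin ψ * Real.cos φ,
     Real.sin ψ * Real.sin φ + Real.cos ψ * Real.sin θ * Real.cos φ;
     Real.sin ψ * Real.cos θ,
     Real.cos ψ * Real.cos φ + Real.sin ψ * Real.sin θ * Real.sin φ,
     Real.sin ψ * Real.sin θ * Real.cos φ - Real.cos ψ * Real.sin φ;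
     -Real.sin θ, Real.cos θ * Real.sin φ, Real.cos θ * Real.cos φ]

/-- The matrix transforming ZYX Euler-angle rates into the body angular velocity. -/
noncomputable def Tb (ψ θ : ℝ) : Matrix (Fin 3) (Fin 3) ℝ :=
  !![0, -Real.sin ψ, Real.cos ψ * Real.cos θ;
     0, Real.cos ψ, Real.sin ψ * Real.cos θ;
     1, 0, -Real.sin θ]

/-- The skew-symmetric matrix of `v ∈ ℝ³`, so that `skew v *ᵥ w = v × w`. -/
def skew (v : Fin 3 → ℝ) : Matrix (Fin 3) (Fin 3) ℝ :=
  !![0, -v 2, v 1; v 2, 0, -v 0; -v 1, v 0, 0]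

/-- For differentiable Euler angles `(ψ, θ, φ)`, the ZYX rotation `R(t) = R_b(ψ,θ,φ)`
satisfies `Ṙ = Skew(ω_b) R` with `ω_b = T_b(ψ,θ) (ψ̇, θ̇, φ̇)`; i.e. `T_b` transforms
the Euler-angle rates into the body angular velocity. -/
theorem stmt_11 (ψ θ φ ψ' θ' φ' : ℝ → ℝ)
    (hψ : ∀ t, HasDerivAt ψ (ψ' t) t) (hθ : ∀ t, HasDerivAt θ (θ' t) t)
    (hφ : ∀ t, HasDerivAt φ (φ' t) t) :
    ∀ t (i j : Fin 3),
      HasDerivAt (fun s => Rb (ψ s) (θ s) (φ s) i j)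
        ((skew (Tb (ψ t) (θ t) *ᵥ ![ψ' t, θ' t, φ' t]) * Rb (ψ t) (θ t) (φ t)) i j) t := by
  intro t i j
  have hsψ := (hψ t).sin
  have hcψ := (hψ t).cos
  have hsθ := (hθ t).sin
  have hcθ := (hθ t).cos
  have hsφ := (hφ t).sin
  have hcφ := (hφ t).cos
  fin_cases i <;> fin_cases j <;>
    simp only [Rb, Tb, skew, Matrix.mul_apply, Matrix.mulVec, dotProduct,
      Fin.sum_univ_three, Matrix.cons_val', Matrix.cons_val_zero, Matrix.cons_val_one,
      Matrix.head_cons, Matrix.empty_val', Matrix.cons_val_fin_one, Matrix.head_fin_const,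
      Matrix.cons_val_two, Matrix.tail_cons, Matrix.of_apply, Fin.isValue, Fin.reduceFinMk, Fin.zero_eta, Fin.mk_one]
  · refine (hcψ.fun_mul hcθ).congr_deriv (Eq.symm ?_); ring
  · refine (((hsφ.fun_mul hsθ).fun_mul hcψ).sub (hsψ.fun_mul hcφ)).congr_deriv (Eq.symm ?_)
    linear_combination (φ' t * Real.sin (ψ t) * Real.sin (φ t)) * Real.sin_sq_add_cos_sq (θ t)
  · refine ((hsψ.fun_mul hsφ).add ((hcψ.fun_mul hsθ).fun_mul hcφ)).congr_deriv (Eq.symm ?_)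
    linear_combination (φ' t * Real.sin (ψ t) * Real.cos (φ t)) * Real.sin_sq_add_cos_sq (θ t)
  · refine (hsψ.fun_mul hcθ).congr_deriv (Eq.symm ?_); ring
  · refine ((hcψ.fun_mul hcφ).add ((hsψ.fun_mul hsθ).fun_mul hsφ)).congr_deriv (Eq.symm ?_)
    linear_combination (-(φ' t * Real.cos (ψ t) * Real.sin (φ t))) * Real.sin_sq_add_cos_sq (θ t)
  · refine (((hsψ.fun_mul hsθ).fun_mul hcφ).sub (hcψ.fun_mul hsφ)).congr_deriv (Eq.symm ?_)
    linear_combination (-(φ' t * Real.cos (ψ t) * Real.cos (φ t))) * Real.sin_sq_add_cos_sq (θ t)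
  · refine (hsθ.neg).congr_deriv (Eq.symm ?_)
    linear_combination (-(θ' t * Real.cos (θ t))) * Real.sin_sq_add_cos_sq (ψ t)
  · refine (hcθ.fun_mul hsφ).congr_deriv (Eq.symm ?_)
    linear_combination (φ' t * Real.cos (θ t) * Real.cos (φ t) - θ' t * Real.sin (θ t) * Real.sin (φ t)) * Real.sin_sq_add_cos_sq (ψ t)
  · refine (hcθ.fun_mul hcφ).congr_deriv (Eq.symm ?_)
    linear_combination (-(θ' t * Real.sin (θ t) * Real.cos (φ t)) - φ' t * Real.cos (θ t) * Real.sin (φ t)) * Real.sin_sq_add_cos_sq (ψ t)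
end

section
/- Let A be a real n×n matrix, A_u a real m×m matrix, B ∈ ℝⁿ a column vector and X₀ ∈ ℝᵐ a row vector, and define the n×m matrix Φ(ι) := ∫₀^ι exp(A(ι − s)) (B X₀) exp(A_u s) ds for ι ≥ 0, where B X₀ denotes the n×m outer product and exp is the matrix exponential. Then for every h > 0 and every integer k ≥ 1, Φ(k h) = exp(A h) Φ((k−1) h) + Φ(h) exp(A_u (k−1) h). -/
open Matrix

section helpers
attribute [local instance] Matrix.linftyOpNormedRing Matrix.linftyOpNormedAlgebra

private lemma exp_smul_entry_continuous {p : ℕ} (A : Matrix (Fin p) (Fin p) ℝ)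
    (a b : ℝ) (i j : Fin p) :
    Continuous fun s : ℝ => (NormedSpace.exp ((a * s + b) • A)) i j := by
  have h1 : Continuous fun s : ℝ => NormedSpace.exp ((a * s + b) • A) :=
    NormedSpace.exp_continuous.comp
      (((continuous_const.mul continuous_id).add continuous_const).smul continuous_const)
  exact (continuous_apply j).comp ((continuous_apply i).comp h1)

private lemma exp_smul_add {p : ℕ} (A : Matrix (Fin p) (Fin p) ℝ) (a b : ℝ) :
    NormedSpace.exp ((a + b) • A)
      = NormedSpace.exp (a • A) * NormedSpace.exp (b • A) := by
  rw [add_smul]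
  exact NormedSpace.exp_add_of_commute (((Commute.refl A).smul_left a).smul_right b)
end helpers

/-- Recursive off-line computation of the MPC prediction matrix
`Φ(ι) = ∫₀^ι e^{A(ι−s)} (B X₀) e^{A_u s} ds`: for every `h > 0` and `k ≥ 1`,
`Φ(kh) = e^{Ah} Φ((k−1)h) + Φ(h) e^{A_u (k−1)h}`. -/
theorem stmt_18 (n m : ℕ) (A : Matrix (Fin n) (Fin n) ℝ) (Au : Matrix (Fin m) (Fin m) ℝ)
    (B : Fin n → ℝ) (X₀ : Fin m → ℝ)
    (Φ : ℝ → Matrix (Fin n) (Fin m) ℝ)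
    (hΦ : ∀ ι : ℝ, Φ ι = Matrix.of fun i j =>
      ∫ s in (0 : ℝ)..ι,
        (NormedSpace.exp ((ι - s) • A) * vecMulVec B X₀ * NormedSpace.exp (s • Au)) i j)
    (h : ℝ) (hh : 0 < h) (k : ℕ) (hk : 1 ≤ k) :
    Φ ((k : ℝ) * h)
      = NormedSpace.exp (h • A) * Φ (((k : ℝ) - 1) * h)
        + Φ h * NormedSpace.exp ((((k : ℝ) - 1) * h) • Au) := by
  set M := vecMulVec B X₀ with hM
  set c : ℝ := ((k : ℝ) - 1) * h with hc
  have hkh : (k : ℝ) * h = c + h := by rw [hc]; ring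
  -- entry continuity of the integrand
  have hcont : ∀ (ι : ℝ) (i : Fin n) (j : Fin m),
      Continuous fun s : ℝ =>
        (NormedSpace.exp ((ι - s) • A) * M * NormedSpace.exp (s • Au)) i j := by
    intro ι i j
    simp only [Matrix.mul_apply]
    refine continuous_finset_sum _ fun l _ => Continuous.mul ?_ ?_
    · refine continuous_finset_sum _ fun l' _ => Continuous.mul ?_ continuous_const
      have := exp_smul_entry_continuous A (-1) ι i l'
      simpa [sub_eq_add_neg, add_comm, mul_comm, neg_mul] using
        (exp_smul_entry_continuous A (-1) ι i l').congr (fun s => by ring_nf)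
    · simpa using (exp_smul_entry_continuous Au 1 0 l j).congr (fun s => by ring_nf)
  ext i j
  rw [hkh, hΦ (c + h), hΦ c, hΦ h]
  simp only [Matrix.of_apply, Matrix.add_apply]
  -- split the integral
  have hint : ∀ a b : ℝ, IntervalIntegrable
      (fun s => (NormedSpace.exp ((c + h - s) • A) * M * NormedSpace.exp (s • Au)) i j)
      MeasureTheory.volume a b := fun a b => (hcont (c + h) i j).intervalIntegrable a b
  rw [← intervalIntegral.integral_add_adjacent_intervals (hint 0 c) (hint c (c + h))]
  congr 1
  · -- first piece equals (exp(h•A) * Φ c) i j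
    have key : ∀ s : ℝ,
        (NormedSpace.exp ((c + h - s) • A) * M * NormedSpace.exp (s • Au)) i j
          = ∑ l, (NormedSpace.exp (h • A)) i l *
              (NormedSpace.exp ((c - s) • A) * M * NormedSpace.exp (s • Au)) l j := by
      intro s
      have : (c + h - s) = h + (c - s) := by ring
      rw [this, exp_smul_add, Matrix.mul_assoc, Matrix.mul_assoc, Matrix.mul_apply]
      simp [Matrix.mul_assoc]
    rw [intervalIntegral.integral_congr (fun s _ => key s)]
    rw [intervalIntegral.integral_finset_sum]
    · rw [Matrix.mul_apply]
      refine Finset.sum_congr rfl fun l _ => ?_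
      rw [intervalIntegral.integral_const_mul]
      simp [hΦ c]
    · intro l _
      exact ((continuous_const.mul (hcont c l j)).intervalIntegrable 0 c)
  · -- second piece equals (Φ h * exp(c • Au)) i j
    have subst := intervalIntegral.integral_comp_add_right (a := 0) (b := h) (d := c)
      (f := fun s => (NormedSpace.exp ((c + h - s) • A) * M * NormedSpace.exp (s • Au)) i j)
    rw [zero_add] at subst
    have hhc : h + c = c + h := by ring
    rw [hhc] at subst
    rw [← subst]
    have key : ∀ s : ℝ,
        (NormedSpace.exp ((c + h - (s + c)) • A) * M * NormedSpace.exp ((s + c) • Au)) i j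
          = ∑ l, (NormedSpace.exp ((h - s) • A) * M * NormedSpace.exp (s • Au)) i l *
              (NormedSpace.exp (c • Au)) l j := by
      intro s
      have h1 : (c + h - (s + c)) = h - s := by ring
      rw [h1, exp_smul_add, ← Matrix.mul_assoc, Matrix.mul_apply]
    rw [intervalIntegral.integral_congr (fun s _ => key s)]
    rw [intervalIntegral.integral_finset_sum]
    · rw [Matrix.mul_apply]
      refine Finset.sum_congr rfl fun l _ => ?_
      rw [intervalIntegral.integral_mul_const]
      simp [hΦ h]
    · intro l _
      exact (((hcont h i l).mul continuous_const).intervalIntegrable 0 h)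
end
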